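/- Uniqueness of Wick polynomials: if W' is a polynomial of total degree at most |I| in the variables (y_j) such that E[W' · y^{I'}] = Σ_{π∈P(I+I'), every block meets I'} ∏_{A∈π} κ[y_A] holds for all sequences I' with |I'| ≤ N−|I| (where 2|I| ≤ N, moments of order N exist, and the family of random variables is closed under complex conjugation), then W' equals the Wick polynomial :y^I: μ-almost surely. -/

import Mathlib

open MeasureTheory Finset

/-- The moment `E[∏_{l∈A} y_{f(l)}]` of a labeled family of complex random variables. -/
noncomputable def momS {Ω : Type*} [MeasurableSpace Ω] {J L : Type*}
    (μ : Measure Ω) (y : J → Ω → ℂ) (f : L → J) (A : Finset L) : ℂ :=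
  ∫ ω, ∏ l ∈ A, y (f l) ω ∂μ

open scoped Classical in
/-- Set partitions of a finite (label) set `A`. -/
noncomputable def partitionsOf {ι : Type*} (A : Finset ι) : Finset (Finset (Finset ι)) :=
  A.powerset.powerset.filter fun π =>
    (∀ B ∈ π, B.Nonempty) ∧ (∀ B ∈ π, ∀ C ∈ π, B ≠ C → Disjoint B C) ∧ π.sup id = A

/-- The joint cumulant of a labeled family of complex random variables. -/
noncomputable def cumS {Ω : Type*} [MeasurableSpace Ω] {J L : Type*}
    (μ : Measure Ω) (y : J → Ω → ℂ) (f : L → J) (A : Finset L) : ℂ :=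
  ∑ π ∈ partitionsOf A,
    (-1 : ℂ) ^ (π.card - 1) * (Nat.factorial (π.card - 1)) * ∏ B ∈ π, momS μ y f B

/-- The Wick polynomial `:y^I:` (as a random variable) of a labeled family,
defined by the recursion `:y^I: = y^I − Σ_{∅≠E⊆I} E[y^E]·:y^{I∖E}:`. -/
noncomputable def wickS {Ω : Type*} [MeasurableSpace Ω] {J L : Type*} [DecidableEq L]
    (μ : Measure Ω) (y : J → Ω → ℂ) (f : L → J) (A : Finset L) : Ω → ℂ :=
  fun ω => (∏ l ∈ A, y (f l) ω) -
    ∑ E ∈ (A.powerset.filter fun E => E ≠ ∅).attach,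
      momS μ y f E.1 * wickS μ y f (A \ E.1) ω
termination_by A.card
decreasing_by
  have h := E.2
  simp only [Finset.mem_filter, Finset.mem_powerset] at h
  exact Finset.card_lt_card (Finset.sdiff_ssubset h.1 (Finset.nonempty_iff_ne_empty.mpr h.2))


set_option linter.unusedSectionVars false
set_option linter.unusedVariables false
set_option maxHeartbeats 1000000

open scoped Classical

section PartitionCombinatorics

variable {ι : Type*} [DecidableEq ι]

lemma finset_sup_id_irrel (i1 i2 : DecidableEq ι) (π : Finset (Finset ι)) :
    @Finset.sup (Finset ι) (Finset ι)
      (@Lattice.toSemilatticeSup (Finset ι) (@Finset.instLattice ι i1))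
      Finset.instOrderBot π id
    = @Finset.sup (Finset ι) (Finset ι)
      (@Lattice.toSemilatticeSup (Finset ι) (@Finset.instLattice ι i2))
      Finset.instOrderBot π id := by
  ext x
  simp only [Finset.mem_sup]

lemma mem_partitionsOf {A : Finset ι} {π : Finset (Finset ι)} :
    π ∈ partitionsOf A ↔
      (∀ B ∈ π, B.Nonempty) ∧ (∀ B ∈ π, ∀ C ∈ π, B ≠ C → Disjoint B C) ∧ π.sup id = A := by
  unfold partitionsOf
  simp only [mem_filter, mem_powerset]
  have hsup := finset_sup_id_irrel (fun a b => Classical.propDecidable (a = b))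
    (inferInstance : DecidableEq ι) π
  constructor
  · rintro ⟨_, h1, h2, h3⟩
    exact ⟨h1, h2, hsup ▸ h3⟩
  · rintro ⟨h1, h2, h3⟩
    refine ⟨?_, h1, h2, hsup.symm ▸ h3⟩
    intro B hB
    rw [Finset.mem_powerset]
    simpa using (Finset.le_sup (f := id) hB).trans h3.le

lemma partitionsOf_empty : partitionsOf (∅ : Finset ι) = {∅} := by
  ext π
  simp only [mem_partitionsOf, mem_singleton]
  constructor
  · rintro ⟨h1, h2, h3⟩
    by_contra hne
    obtain ⟨B, hB⟩ := Finset.nonempty_iff_ne_empty.2 hne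
    obtain ⟨x, hx⟩ := h1 B hB
    have : x ∈ π.sup id := Finset.mem_sup.2 ⟨B, hB, hx⟩
    rw [h3] at this; simp at this
  · rintro rfl; simp

lemma insert_mem_partitionsOf {A T : Finset ι} (hT : T.Nonempty) (hTA : T ⊆ A)
    {σ : Finset (Finset ι)} (hσ : σ ∈ partitionsOf (A \ T)) :
    insert T σ ∈ partitionsOf A ∧ T ∉ σ := by
  rw [mem_partitionsOf] at hσ ⊢
  obtain ⟨h1, h2, h3⟩ := hσ
  have hsub : ∀ B ∈ σ, B ⊆ A \ T := fun B hB => by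
    simpa using (Finset.le_sup (f := id) hB).trans h3.le
  have hTσ : T ∉ σ := by
    intro hTm
    obtain ⟨x, hx⟩ := hT
    have := hsub T hTm hx
    simp [hx] at this
  refine ⟨⟨?_, ?_, ?_⟩, hTσ⟩
  · intro B hB
    rcases mem_insert.1 hB with rfl | hB
    · exact hT
    · exact h1 B hB
  · intro B hB C hC hne
    rcases mem_insert.1 hB with hB' | hB' <;> rcases mem_insert.1 hC with hC' | hC'
    · exact absurd (hB'.trans hC'.symm) hne
    · rw [hB']; exact (Finset.sdiff_disjoint.mono_left (hsub C hC')).symm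
    · rw [hC']; exact Finset.sdiff_disjoint.mono_left (hsub B hB')
    · exact h2 B hB' C hC' hne
  · rw [Finset.sup_insert, h3]
    simpa using Finset.union_sdiff_of_subset hTA

lemma erase_mem_partitionsOf {A : Finset ι} {π : Finset (Finset ι)}
    (hπ : π ∈ partitionsOf A) {T : Finset ι} (hT : T ∈ π) :
    π.erase T ∈ partitionsOf (A \ T) := by
  rw [mem_partitionsOf] at hπ ⊢
  obtain ⟨h1, h2, h3⟩ := hπ
  refine ⟨fun B hB => h1 B (mem_of_mem_erase hB),
    fun B hB C hC hne => h2 B (mem_of_mem_erase hB) C (mem_of_mem_erase hC) hne, ?_⟩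
  apply le_antisymm
  · intro x hx
    obtain ⟨B, hB, hxB⟩ := Finset.mem_sup.1 hx
    have hBπ := mem_of_mem_erase hB
    have hBne := (Finset.ne_of_mem_erase hB)
    refine Finset.mem_sdiff.2 ⟨by
      have : x ∈ π.sup id := Finset.mem_sup.2 ⟨B, hBπ, hxB⟩
      rwa [h3] at this, ?_⟩
    intro hxT
    simpa using (h2 B hBπ T hT hBne).le_bot (Finset.mem_inter.2 ⟨hxB, hxT⟩)
  · intro x hx
    obtain ⟨hxA, hxT⟩ := Finset.mem_sdiff.1 hx
    rw [← h3] at hxA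
    obtain ⟨B, hB, hxB⟩ := Finset.mem_sup.1 hxA
    have hBT : B ≠ T := fun h => hxT (h ▸ hxB)
    exact Finset.mem_sup.2 ⟨B, Finset.mem_erase.2 ⟨hBT, hB⟩, hxB⟩


noncomputable def blockAt (π : Finset (Finset ι)) (a : ι) : Finset ι :=
  π.sup fun B => if a ∈ B then B else ∅

lemma blockAt_eq (π : Finset (Finset ι)) (a : ι)
    (h2 : ∀ B ∈ π, ∀ C ∈ π, B ≠ C → Disjoint B C)
    {B : Finset ι} (hB : B ∈ π) (ha : a ∈ B) : blockAt π a = B := by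
  unfold blockAt
  apply le_antisymm
  · apply Finset.sup_le
    intro C hC
    by_cases hac : a ∈ C
    · rw [if_pos hac]
      by_cases hCB : C = B
      · exact hCB.le
      · exact absurd (Finset.mem_inter.2 ⟨hac, ha⟩)
          (fun hmem => by simpa using (h2 C hC B hB hCB).le_bot hmem)
    · simp [hac]
  · have : B = (fun C => if a ∈ C then C else ∅) B := by simp [ha]
    exact this.le.trans (Finset.le_sup (f := fun C => if a ∈ C then C else ∅) hB)



lemma subset_of_mem_partitionsOf {A : Finset ι} {π : Finset (Finset ι)}
    (hπ : π ∈ partitionsOf A) {B : Finset ι} (hB : B ∈ π) : B ⊆ A := by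
  have h3 := (mem_partitionsOf.1 hπ).2.2
  simpa using (Finset.le_sup (f := id) hB).trans h3.le

lemma blockAt_mem {A : Finset ι} {π : Finset (Finset ι)} (hπ : π ∈ partitionsOf A)
    {a : ι} (ha : a ∈ A) : blockAt π a ∈ π ∧ a ∈ blockAt π a := by
  obtain ⟨h1, h2, h3⟩ := mem_partitionsOf.1 hπ
  obtain ⟨B, hB, haB⟩ := Finset.mem_sup.1 (h3.symm ▸ ha)
  rw [blockAt_eq π a h2 hB haB]
  exact ⟨hB, haB⟩

lemma partitionsOf_sum_block {M : Type*} [AddCommMonoid M] {A : Finset ι} {a : ι} (ha : a ∈ A)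
    (F : Finset (Finset ι) → M) :
    ∑ π ∈ partitionsOf A, F π
      = ∑ S ∈ A.powerset.filter (fun S => a ∈ S), ∑ σ ∈ partitionsOf (A \ S), F (insert S σ) := by
  rw [← Finset.sum_sigma (A.powerset.filter fun S => a ∈ S) (fun S => partitionsOf (A \ S))
      (fun p => F (insert p.1 p.2))]
  apply Finset.sum_bij'
    (i := fun π _ => (⟨blockAt π a, π.erase (blockAt π a)⟩ : Σ _ : Finset ι, Finset (Finset ι)))
    (j := fun p _ => insert p.1 p.2)
  · intro π hπ
    obtain ⟨hmem, hamem⟩ := blockAt_mem hπ ha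
    exact Finset.mem_sigma.2 ⟨Finset.mem_filter.2
      ⟨Finset.mem_powerset.2 (subset_of_mem_partitionsOf hπ hmem), hamem⟩,
      erase_mem_partitionsOf hπ hmem⟩
  · rintro ⟨S, σ⟩ hp
    obtain ⟨hS, hσ⟩ := Finset.mem_sigma.1 hp
    obtain ⟨hSA, haS⟩ := Finset.mem_filter.1 hS
    exact (insert_mem_partitionsOf ⟨a, haS⟩ (Finset.mem_powerset.1 hSA) hσ).1
  · intro π hπ
    exact Finset.insert_erase (blockAt_mem hπ ha).1
  · rintro ⟨S, σ⟩ hp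
    obtain ⟨hS, hσ⟩ := Finset.mem_sigma.1 hp
    obtain ⟨hSA, haS⟩ := Finset.mem_filter.1 hS
    obtain ⟨hins, hnot⟩ := insert_mem_partitionsOf ⟨a, haS⟩ (Finset.mem_powerset.1 hSA) hσ
    have h2 := (mem_partitionsOf.1 hins).2.1
    have h1 : blockAt (insert S σ) a = S :=
      blockAt_eq _ a h2 (Finset.mem_insert_self S σ) haS
    simp only [h1, Finset.erase_insert hnot]
  · intro π hπ
    rw [Finset.insert_erase (blockAt_mem hπ ha).1]

lemma partitionsOf_sum_pairs {M : Type*} [AddCommMonoid M] (A : Finset ι)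
    (F : Finset ι → Finset (Finset ι) → M) :
    ∑ π ∈ partitionsOf A, ∑ T ∈ π, F T π
      = ∑ T ∈ A.powerset.filter (fun T => T.Nonempty),
          ∑ σ ∈ partitionsOf (A \ T), F T (insert T σ) := by
  rw [← Finset.sum_sigma (partitionsOf A) (fun π => π) (fun p => F p.2 p.1),
    ← Finset.sum_sigma (A.powerset.filter fun T => T.Nonempty) (fun T => partitionsOf (A \ T))
      (fun p => F p.1 (insert p.1 p.2))]
  apply Finset.sum_bij'
    (i := fun p _ => (⟨p.2, p.1.erase p.2⟩ : Σ _ : Finset ι, Finset (Finset ι)))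
    (j := fun p _ => (⟨insert p.1 p.2, p.1⟩ : Σ _ : Finset (Finset ι), Finset ι))
  · rintro ⟨π, T⟩ hp
    obtain ⟨hπ, hT⟩ := Finset.mem_sigma.1 hp
    exact Finset.mem_sigma.2 ⟨Finset.mem_filter.2
      ⟨Finset.mem_powerset.2 (subset_of_mem_partitionsOf hπ hT),
        (mem_partitionsOf.1 hπ).1 T hT⟩, erase_mem_partitionsOf hπ hT⟩
  · rintro ⟨T, σ⟩ hp
    obtain ⟨hT, hσ⟩ := Finset.mem_sigma.1 hp
    obtain ⟨hTA, hTne⟩ := Finset.mem_filter.1 hT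
    exact Finset.mem_sigma.2 ⟨(insert_mem_partitionsOf hTne (Finset.mem_powerset.1 hTA) hσ).1,
      Finset.mem_insert_self _ _⟩
  · rintro ⟨π, T⟩ hp
    obtain ⟨hπ, hT⟩ := Finset.mem_sigma.1 hp
    simp only [Finset.insert_erase hT]
  · rintro ⟨T, σ⟩ hp
    obtain ⟨hT, hσ⟩ := Finset.mem_sigma.1 hp
    obtain ⟨hTA, hTne⟩ := Finset.mem_filter.1 hT
    simp only [Finset.erase_insert
      (insert_mem_partitionsOf hTne (Finset.mem_powerset.1 hTA) hσ).2]
  · rintro ⟨π, T⟩ hp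
    obtain ⟨hπ, hT⟩ := Finset.mem_sigma.1 hp
    simp only [Finset.insert_erase hT]

/-- auxiliary alternating sum `g(U) = Σ_{τ∈P(U)} (−1)^{|τ|}|τ|! Π M(B)`. -/
noncomputable def gM (M : Finset ι → ℂ) (U : Finset ι) : ℂ :=
  ∑ τ ∈ partitionsOf U, (-1 : ℂ) ^ τ.card * (Nat.factorial τ.card) * ∏ B ∈ τ, M B

noncomputable def cumOf (M : Finset ι → ℂ) (A : Finset ι) : ℂ :=
  ∑ π ∈ partitionsOf A,
    (-1 : ℂ) ^ (π.card - 1) * (Nat.factorial (π.card - 1)) * ∏ B ∈ π, M B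

lemma gM_empty (M : Finset ι → ℂ) : gM M (∅ : Finset ι) = 1 := by
  unfold gM; rw [partitionsOf_empty]; simp

lemma card_pos_of_mem_partitionsOf {U : Finset ι} (hU : U.Nonempty)
    {τ : Finset (Finset ι)} (hτ : τ ∈ partitionsOf U) : 0 < τ.card := by
  rcases τ.eq_empty_or_nonempty with rfl | h
  · have h3 := (mem_partitionsOf.1 hτ).2.2
    simp at h3
    rw [← h3] at hU
    simp at hU
  · exact Finset.card_pos.2 h

lemma gM_rec (M : Finset ι → ℂ) {U : Finset ι} (hU : U.Nonempty) :
    gM M U = -∑ T ∈ U.powerset.filter (fun T => T.Nonempty), M T * gM M (U \ T) := by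
  have h1 : gM M U = ∑ τ ∈ partitionsOf U, ∑ T ∈ τ,
      ((-1 : ℂ) ^ τ.card * (Nat.factorial (τ.card - 1)) * ∏ B ∈ τ, M B) := by
    unfold gM
    refine Finset.sum_congr rfl fun τ hτ => ?_
    have hc := card_pos_of_mem_partitionsOf hU hτ
    rw [Finset.sum_const, nsmul_eq_mul]
    rw [show (Nat.factorial τ.card : ℂ) = (τ.card : ℂ) * (Nat.factorial (τ.card - 1) : ℂ) by
      rw [← Nat.cast_mul, Nat.mul_factorial_pred hc.ne']]
    ring
  rw [h1, partitionsOf_sum_pairs]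
  rw [← Finset.sum_neg_distrib]
  refine Finset.sum_congr rfl fun T hT => ?_
  obtain ⟨hTA, hTne⟩ := Finset.mem_filter.1 hT
  unfold gM
  rw [Finset.mul_sum, ← Finset.sum_neg_distrib]
  refine Finset.sum_congr rfl fun σ hσ => ?_
  have hnot : T ∉ σ := (insert_mem_partitionsOf hTne (Finset.mem_powerset.1 hTA) hσ).2
  rw [Finset.card_insert_of_notMem hnot, Finset.prod_insert hnot]
  simp only [Nat.add_sub_cancel]
  ring

lemma Gzero (M : Finset ι → ℂ) (hM : M ∅ = 1) {X : Finset ι} (hX : X.Nonempty) :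
    ∑ T ∈ X.powerset, M T * gM M (X \ T) = 0 := by
  rw [← Finset.sum_filter_add_sum_filter_not X.powerset (fun T => T = ∅)]
  have h1 : X.powerset.filter (fun T => T = ∅) = {∅} := by
    ext T
    simp only [Finset.mem_filter, Finset.mem_powerset, Finset.mem_singleton,
      and_iff_right_iff_imp]
    rintro rfl; exact Finset.empty_subset X
  have h2 : X.powerset.filter (fun T => ¬ T = ∅) = X.powerset.filter (fun T => T.Nonempty) := by
    refine Finset.filter_congr fun T _ => ?_
    simp [Finset.nonempty_iff_ne_empty]
  rw [h1, h2, Finset.sum_singleton, Finset.sdiff_empty, hM, one_mul, gM_rec M hX]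
  simp

lemma cum_expand (M : Finset ι → ℂ) {S : Finset ι} {a : ι} (ha : a ∈ S) :
    cumOf M S = ∑ T ∈ S.powerset.filter (fun T => a ∈ T), M T * gM M (S \ T) := by
  unfold cumOf
  rw [partitionsOf_sum_block ha]
  refine Finset.sum_congr rfl fun T hT => ?_
  obtain ⟨hTA, haT⟩ := Finset.mem_filter.1 hT
  unfold gM
  rw [Finset.mul_sum]
  refine Finset.sum_congr rfl fun σ hσ => ?_
  have hnot : T ∉ σ := (insert_mem_partitionsOf ⟨a, haT⟩ (Finset.mem_powerset.1 hTA) hσ).2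
  rw [Finset.card_insert_of_notMem hnot, Finset.prod_insert hnot]
  simp only [Nat.add_sub_cancel]
  ring

lemma powerset_sum_reflect (X : Finset ι) (F G : Finset ι → ℂ) :
    ∑ U ∈ X.powerset, F U * G (X \ U) = ∑ U ∈ X.powerset, F (X \ U) * G U := by
  apply Finset.sum_nbij' (i := fun U => X \ U) (j := fun U => X \ U)
  · intro U hU; exact Finset.mem_powerset.2 (Finset.sdiff_subset)
  · intro U hU; exact Finset.mem_powerset.2 (Finset.sdiff_subset)
  · intro U hU; exact Finset.sdiff_sdiff_eq_self (Finset.mem_powerset.1 hU)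
  · intro U hU; exact Finset.sdiff_sdiff_eq_self (Finset.mem_powerset.1 hU)
  · intro U hU
    rw [Finset.sdiff_sdiff_eq_self (Finset.mem_powerset.1 hU)]

lemma moment_rec (M : Finset ι → ℂ) (hM : M ∅ = 1) {A : Finset ι} {a : ι} (ha : a ∈ A) :
    ∑ S ∈ A.powerset.filter (fun S => a ∈ S), cumOf M S * M (A \ S) = M A := by
  have step1 : ∑ S ∈ A.powerset.filter (fun S => a ∈ S), cumOf M S * M (A \ S)
      = ∑ S ∈ A.powerset.filter (fun S => a ∈ S),
          ∑ T ∈ S.powerset.filter (fun T => a ∈ T), M T * gM M (S \ T) * M (A \ S) := by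
    refine Finset.sum_congr rfl fun S hS => ?_
    rw [cum_expand M (Finset.mem_filter.1 hS).2, Finset.sum_mul]
  rw [step1,
    ← Finset.sum_sigma (A.powerset.filter fun S => a ∈ S)
      (fun S => S.powerset.filter fun T => a ∈ T)
      (fun p => M p.2 * gM M (p.1 \ p.2) * M (A \ p.1))]
  have swap : ∑ p ∈ (A.powerset.filter fun S => a ∈ S).sigma
        (fun S => S.powerset.filter fun T => a ∈ T),
        M p.2 * gM M (p.1 \ p.2) * M (A \ p.1)
      = ∑ p ∈ (A.powerset.filter fun T => a ∈ T).sigma (fun T => (A \ T).powerset),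
        M p.1 * (gM M p.2 * M ((A \ p.1) \ p.2)) := by
    apply Finset.sum_bij'
      (i := fun p _ => (⟨p.2, p.1 \ p.2⟩ : Σ _ : Finset ι, Finset ι))
      (j := fun p _ => (⟨p.1 ∪ p.2, p.1⟩ : Σ _ : Finset ι, Finset ι))
    · rintro ⟨S, T⟩ hp
      obtain ⟨hS, hT⟩ := Finset.mem_sigma.1 hp
      obtain ⟨hSA, haS⟩ := Finset.mem_filter.1 hS
      obtain ⟨hTS, haT⟩ := Finset.mem_filter.1 hT
      exact Finset.mem_sigma.2 ⟨Finset.mem_filter.2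
        ⟨Finset.mem_powerset.2 ((Finset.mem_powerset.1 hTS).trans (Finset.mem_powerset.1 hSA)),
          haT⟩,
        Finset.mem_powerset.2 (Finset.sdiff_subset_sdiff (Finset.mem_powerset.1 hSA) le_rfl)⟩
    · rintro ⟨T, U⟩ hp
      obtain ⟨hT, hU⟩ := Finset.mem_sigma.1 hp
      obtain ⟨hTA, haT⟩ := Finset.mem_filter.1 hT
      refine Finset.mem_sigma.2 ⟨Finset.mem_filter.2 ⟨Finset.mem_powerset.2 ?_,
        Finset.mem_union_left _ haT⟩, Finset.mem_filter.2
          ⟨Finset.mem_powerset.2 Finset.subset_union_left, haT⟩⟩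
      exact Finset.union_subset (Finset.mem_powerset.1 hTA)
        ((Finset.mem_powerset.1 hU).trans Finset.sdiff_subset)
    · rintro ⟨S, T⟩ hp
      obtain ⟨hS, hT⟩ := Finset.mem_sigma.1 hp
      obtain ⟨hTS, haT⟩ := Finset.mem_filter.1 hT
      simp only [Finset.union_sdiff_of_subset (Finset.mem_powerset.1 hTS)]
    · rintro ⟨T, U⟩ hp
      obtain ⟨hT, hU⟩ := Finset.mem_sigma.1 hp
      have hd : Disjoint T U :=
        (Finset.sdiff_disjoint.mono_left (Finset.mem_powerset.1 hU)).symm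
      simp only [Finset.union_sdiff_cancel_left hd]
    · rintro ⟨S, T⟩ hp
      obtain ⟨hS, hT⟩ := Finset.mem_sigma.1 hp
      obtain ⟨hSA, haS⟩ := Finset.mem_filter.1 hS
      obtain ⟨hTS, haT⟩ := Finset.mem_filter.1 hT
      have heq : A \ S = (A \ T) \ (S \ T) := by
        ext x
        simp only [Finset.mem_sdiff]
        constructor
        · rintro ⟨hxA, hxS⟩
          exact ⟨⟨hxA, fun h => hxS ((Finset.mem_powerset.1 hTS) h)⟩, fun h => hxS h.1⟩
        · rintro ⟨⟨hxA, hxT⟩, h⟩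
          exact ⟨hxA, fun hxS => h ⟨hxS, hxT⟩⟩
      rw [heq]; ring
  rw [swap, Finset.sum_sigma]
  have inner : ∀ T ∈ A.powerset.filter (fun T => a ∈ T),
      (∑ U ∈ (A \ T).powerset, M T * (gM M U * M ((A \ T) \ U)))
        = if T = A then M A else 0 := by
    intro T hT
    obtain ⟨hTA, haT⟩ := Finset.mem_filter.1 hT
    rw [← Finset.mul_sum]
    have hrefl : ∑ U ∈ (A \ T).powerset, gM M U * M ((A \ T) \ U)
        = ∑ U ∈ (A \ T).powerset, M U * gM M ((A \ T) \ U) := by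
      rw [powerset_sum_reflect (A \ T) (gM M) M]
      exact Finset.sum_congr rfl fun U _ => mul_comm _ _
    rw [hrefl]
    by_cases hTA' : T = A
    · subst hTA'
      rw [if_pos rfl]
      simp [gM_empty, hM]
    · rw [if_neg hTA']
      have hX : (A \ T).Nonempty := by
        rw [Finset.sdiff_nonempty]
        exact fun h => hTA' (Finset.Subset.antisymm (Finset.mem_powerset.1 hTA) h)
      rw [Gzero M hM hX, mul_zero]
  rw [Finset.sum_congr rfl inner,
    Finset.sum_ite_eq' (A.powerset.filter fun T => a ∈ T) A (fun _ => M A),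
    if_pos (Finset.mem_filter.2 ⟨Finset.mem_powerset.2 le_rfl, ha⟩)]

lemma cum_inversion (M : Finset ι → ℂ) (hM : M ∅ = 1) (A : Finset ι) :
    ∑ π ∈ partitionsOf A, ∏ B ∈ π, cumOf M B = M A := by
  induction A using Finset.strongInduction with
  | _ A ih =>
    rcases A.eq_empty_or_nonempty with rfl | ⟨a, ha⟩
    · rw [partitionsOf_empty]
      simp [hM]
    · rw [partitionsOf_sum_block ha (fun π => ∏ B ∈ π, cumOf M B),
        ← moment_rec M hM ha]
      refine Finset.sum_congr rfl fun S hS => ?_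
      obtain ⟨hSA, haS⟩ := Finset.mem_filter.1 hS
      have hssub : A \ S ⊂ A :=
        Finset.sdiff_ssubset (Finset.mem_powerset.1 hSA) ⟨a, haS⟩
      rw [← ih (A \ S) hssub, Finset.mul_sum]
      refine Finset.sum_congr rfl fun σ hσ => ?_
      have hnot : S ∉ σ :=
        (insert_mem_partitionsOf ⟨a, haS⟩ (Finset.mem_powerset.1 hSA) hσ).2
      rw [Finset.prod_insert hnot]

lemma partitionsOf_split (Z La : Finset ι) (w : Finset ι → ℂ) :
    ∑ π ∈ partitionsOf Z, ∏ B ∈ π, w B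
      = ∑ E ∈ (Z ∩ La).powerset,
          (∑ σ ∈ partitionsOf E, ∏ B ∈ σ, w B) *
          (∑ π' ∈ (partitionsOf (Z \ E)).filter (fun π' => ∀ B ∈ π', ¬ B ⊆ La),
            ∏ B ∈ π', w B) := by
  have hR : ∀ E ∈ (Z ∩ La).powerset,
      (∑ σ ∈ partitionsOf E, ∏ B ∈ σ, w B) *
        (∑ π' ∈ (partitionsOf (Z \ E)).filter (fun π' => ∀ B ∈ π', ¬ B ⊆ La),
          ∏ B ∈ π', w B)
      = ∑ p ∈ (partitionsOf E) ×ˢ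
          ((partitionsOf (Z \ E)).filter (fun π' => ∀ B ∈ π', ¬ B ⊆ La)),
          (∏ B ∈ p.1, w B) * ∏ B ∈ p.2, w B := by
    intro E _
    rw [Finset.sum_mul_sum, Finset.sum_product]
  rw [Finset.sum_congr rfl hR, ← Finset.sum_sigma ((Z ∩ La).powerset)
      (fun E => (partitionsOf E) ×ˢ
        ((partitionsOf (Z \ E)).filter (fun π' => ∀ B ∈ π', ¬ B ⊆ La)))
      (fun p => (∏ B ∈ p.2.1, w B) * ∏ B ∈ p.2.2, w B)]
  apply Finset.sum_bij'
    (i := fun π _ => (⟨(π.filter (fun B => B ⊆ La)).sup id,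
      (π.filter (fun B => B ⊆ La), π.filter (fun B => ¬ B ⊆ La))⟩ :
        Σ _ : Finset ι, Finset (Finset ι) × Finset (Finset ι)))
    (j := fun p _ => p.2.1 ∪ p.2.2)
  · intro π hπ
    obtain ⟨h1, h2, h3⟩ := mem_partitionsOf.1 hπ
    set σ := π.filter (fun B => B ⊆ La) with hσdef
    set π' := π.filter (fun B => ¬ B ⊆ La) with hπ'def
    set E := σ.sup id with hEdef
    have hσsub : ∀ B ∈ σ, B ∈ π ∧ B ⊆ La := fun B hB => by
      have := Finset.mem_filter.1 hB; exact ⟨this.1, this.2⟩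
    have hπ'sub : ∀ B ∈ π', B ∈ π ∧ ¬ B ⊆ La := fun B hB => by
      have := Finset.mem_filter.1 hB; exact ⟨this.1, this.2⟩
    have hσP : σ ∈ partitionsOf E := mem_partitionsOf.2
      ⟨fun B hB => h1 B (hσsub B hB).1,
        fun B hB C hC hne => h2 B (hσsub B hB).1 C (hσsub C hC).1 hne, rfl⟩
    have hsupu : E ∪ π'.sup id = Z := by
      rw [hEdef, ← Finset.sup_eq_union, ← Finset.sup_union,
        Finset.filter_union_filter_not_eq _ π, h3]
    have hdis : Disjoint E (π'.sup id) := by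
      rw [Finset.disjoint_sup_left]
      intro B hB
      rw [Finset.disjoint_sup_right]
      intro C hC
      have hne : B ≠ C := fun h => (hπ'sub C hC).2 (h ▸ (hσsub B hB).2)
      exact h2 B (hσsub B hB).1 C (hπ'sub C hC).1 hne
    have hπ'P : π' ∈ partitionsOf (Z \ E) := by
      refine mem_partitionsOf.2 ⟨fun B hB => h1 B (hπ'sub B hB).1,
        fun B hB C hC hne => h2 B (hπ'sub B hB).1 C (hπ'sub C hC).1 hne, ?_⟩
      apply le_antisymm
      · intro x hx
        obtain ⟨B, hB, hxB⟩ := Finset.mem_sup.1 hx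
        refine Finset.mem_sdiff.2 ⟨?_, ?_⟩
        · rw [← h3]
          exact Finset.mem_sup.2 ⟨B, (hπ'sub B hB).1, hxB⟩
        · intro hxE
          simpa using hdis.le_bot
            (Finset.mem_inter.2 ⟨hxE, Finset.mem_sup.2 ⟨B, hB, hxB⟩⟩)
      · intro x hx
        obtain ⟨hxZ, hxE⟩ := Finset.mem_sdiff.1 hx
        rw [← hsupu] at hxZ
        exact (Finset.mem_union.1 hxZ).resolve_left hxE
    refine Finset.mem_sigma.2 ⟨Finset.mem_powerset.2 ?_, Finset.mem_product.2
      ⟨hσP, Finset.mem_filter.2 ⟨hπ'P, fun B hB => (hπ'sub B hB).2⟩⟩⟩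
    show E ≤ Z ∩ La
    apply Finset.sup_le
    intro B hB
    exact Finset.subset_inter (subset_of_mem_partitionsOf hπ (hσsub B hB).1) (hσsub B hB).2
  · rintro ⟨E, σ, π'⟩ hp
    obtain ⟨hE, hprod⟩ := Finset.mem_sigma.1 hp
    obtain ⟨hσ, hπ'f⟩ := Finset.mem_product.1 hprod
    obtain ⟨hπ', hcond⟩ := Finset.mem_filter.1 hπ'f
    obtain ⟨hσ1, hσ2, hσ3⟩ := mem_partitionsOf.1 hσ
    obtain ⟨hπ'1, hπ'2, hπ'3⟩ := mem_partitionsOf.1 hπ'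
    have hEZ : E ⊆ Z := (Finset.mem_powerset.1 hE).trans Finset.inter_subset_left
    refine mem_partitionsOf.2 ⟨?_, ?_, ?_⟩
    · intro B hB
      rcases Finset.mem_union.1 hB with h | h
      · exact hσ1 B h
      · exact hπ'1 B h
    · intro B hB C hC hne
      rcases Finset.mem_union.1 hB with hBσ | hBπ <;> rcases Finset.mem_union.1 hC with hCσ | hCπ
      · exact hσ2 B hBσ C hCσ hne
      · exact Finset.disjoint_sdiff.mono (subset_of_mem_partitionsOf hσ hBσ)
          (subset_of_mem_partitionsOf hπ' hCπ)
      · exact (Finset.disjoint_sdiff.mono (subset_of_mem_partitionsOf hσ hCσ)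
          (subset_of_mem_partitionsOf hπ' hBπ)).symm
      · exact hπ'2 B hBπ C hCπ hne
    · show (σ ∪ π').sup id = Z
      rw [Finset.sup_union, hσ3, hπ'3, Finset.sup_eq_union]
      exact Finset.union_sdiff_of_subset hEZ
  · intro π hπ
    exact Finset.filter_union_filter_not_eq _ π
  · rintro ⟨E, σ, π'⟩ hp
    obtain ⟨hE, hprod⟩ := Finset.mem_sigma.1 hp
    obtain ⟨hσ, hπ'f⟩ := Finset.mem_product.1 hprod
    obtain ⟨hπ', hcond⟩ := Finset.mem_filter.1 hπ'f
    obtain ⟨hσ1, hσ2, hσ3⟩ := mem_partitionsOf.1 hσ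
    have hσLa : ∀ B ∈ σ, B ⊆ La := fun B hB =>
      (subset_of_mem_partitionsOf hσ hB).trans
        ((Finset.mem_powerset.1 hE).trans Finset.inter_subset_right)
    have hfil1 : (σ ∪ π').filter (fun B => B ⊆ La) = σ := by
      rw [Finset.filter_union, Finset.filter_true_of_mem hσLa,
        Finset.filter_false_of_mem (fun B hB => hcond B hB), Finset.union_empty]
    have hfil2 : (σ ∪ π').filter (fun B => ¬ B ⊆ La) = π' := by
      rw [Finset.filter_union, Finset.filter_false_of_mem (fun B hB h => h (hσLa B hB)),
        Finset.filter_true_of_mem hcond, Finset.empty_union]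
    simp only [hfil1, hfil2, hσ3]
  · intro π hπ
    exact (Finset.prod_filter_mul_prod_filter_not π (fun B => B ⊆ La) w).symm


end PartitionCombinatorics

section MonoSpan

variable {Ω : Type*} [MeasurableSpace Ω] {J : Type*}

/-- The span of monomials of degree at most `n` in the variables `y j`. -/
noncomputable def monoSpan (y : J → Ω → ℂ) (n : ℕ) : Submodule ℂ (Ω → ℂ) :=
  Submodule.span ℂ {f | ∃ m : ℕ, m ≤ n ∧ ∃ g : Fin m → J, f = fun ω => ∏ k, y (g k) ω}

lemma monoSpan_mono (y : J → Ω → ℂ) {p q : ℕ} (h : p ≤ q) : monoSpan y p ≤ monoSpan y q :=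
  Submodule.span_mono fun f ⟨m, hm, g, hg⟩ => ⟨m, hm.trans h, g, hg⟩

lemma finset_prod_eq_fin_prod {L : Type*} (s : Finset L) (F : L → ℂ) :
    ∏ l ∈ s, F l = ∏ k : Fin s.card, F (s.equivFin.symm k) := by
  rw [← Finset.prod_coe_sort s F]
  exact (Equiv.prod_comp s.equivFin.symm fun x => F x).symm

lemma finset_prod_mem_monoSpan (y : J → Ω → ℂ) {n : ℕ} {L : Type*} (s : Finset L)
    (h : L → J) (hcard : s.card ≤ n) :
    (fun ω => ∏ l ∈ s, y (h l) ω) ∈ monoSpan y n := by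
  apply Submodule.subset_span
  refine ⟨s.card, hcard, fun k => h (s.equivFin.symm k), ?_⟩
  funext ω
  exact finset_prod_eq_fin_prod s fun l => y (h l) ω

lemma integrable_finset_prod {μ : Measure Ω} (y : J → Ω → ℂ) {N : ℕ}
    (hint : ∀ m : ℕ, m ≤ N → ∀ g : Fin m → J, Integrable (fun ω => ∏ k, y (g k) ω) μ)
    {L : Type*} (s : Finset L) (h : L → J) (hcard : s.card ≤ N) :
    Integrable (fun ω => ∏ l ∈ s, y (h l) ω) μ := by
  have := hint s.card hcard (fun k => h (s.equivFin.symm k))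
  convert this using 2 with ω
  exact finset_prod_eq_fin_prod s fun l => y (h l) ω

lemma integrable_mul_monoSpan {μ : Measure Ω} (y : J → Ω → ℂ) {N : ℕ}
    (hint : ∀ m : ℕ, m ≤ N → ∀ g : Fin m → J, Integrable (fun ω => ∏ k, y (g k) ω) μ)
    {p q : ℕ} (hpq : p + q ≤ N) {f h : Ω → ℂ}
    (hf : f ∈ monoSpan y p) (hh : h ∈ monoSpan y q) :
    Integrable (fun ω => f ω * h ω) μ := by
  induction hf using Submodule.span_induction with
  | mem f hf =>
    obtain ⟨m1, hm1, g1, rfl⟩ := hf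
    induction hh using Submodule.span_induction with
    | mem h hh =>
      obtain ⟨m2, hm2, g2, rfl⟩ := hh
      have key : (fun ω => (∏ k : Fin m1, y (g1 k) ω) * ∏ k : Fin m2, y (g2 k) ω)
          = fun ω => ∏ k : Fin (m1 + m2), y (Fin.append g1 g2 k) ω := by
        funext ω
        rw [Fin.prod_univ_add]
        congr 1
        · exact Finset.prod_congr rfl fun k _ => by rw [Fin.append_left]
        · exact Finset.prod_congr rfl fun k _ => by rw [Fin.append_right]
      rw [key]
      exact hint (m1 + m2) (by omega) _
    | zero => simpa using (integrable_zero _ _ _)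
    | add h1 h2 hh1 hh2 ih1 ih2 =>
      have : (fun ω => (∏ k : Fin m1, y (g1 k) ω) * (h1 + h2) ω)
          = fun ω => (∏ k : Fin m1, y (g1 k) ω) * h1 ω
              + (∏ k : Fin m1, y (g1 k) ω) * h2 ω := by
        funext ω; simp [mul_add]
      rw [this]; exact ih1.add ih2
    | smul c h1 hh1 ih =>
      have : (fun ω => (∏ k : Fin m1, y (g1 k) ω) * (c • h1) ω)
          = fun ω => c * ((∏ k : Fin m1, y (g1 k) ω) * h1 ω) := by
        funext ω; simp [Pi.smul_apply, smul_eq_mul]; ring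
      rw [this]; exact ih.const_mul c
  | zero => simpa using (integrable_zero _ _ _)
  | add f1 f2 hf1 hf2 ih1 ih2 =>
    have : (fun ω => (f1 + f2) ω * h ω) = fun ω => f1 ω * h ω + f2 ω * h ω := by
      funext ω; simp [add_mul]
    rw [this]; exact ih1.add ih2
  | smul c f1 hf1 ih =>
    have : (fun ω => (c • f1) ω * h ω) = fun ω => c * (f1 ω * h ω) := by
      funext ω; simp [Pi.smul_apply, smul_eq_mul]; ring
    rw [this]; exact ih.const_mul c

lemma integral_mul_monoSpan_zero {μ : Measure Ω} [IsProbabilityMeasure μ] (y : J → Ω → ℂ)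
    {N p q : ℕ}
    (hint : ∀ m : ℕ, m ≤ N → ∀ g : Fin m → J, Integrable (fun ω => ∏ k, y (g k) ω) μ)
    (hpq : p + q ≤ N) {D : Ω → ℂ} (hD : D ∈ monoSpan y p)
    (hz : ∀ m : ℕ, m ≤ q → ∀ g : Fin m → J, ∫ ω, D ω * ∏ k, y (g k) ω ∂μ = 0)
    {h : Ω → ℂ} (hh : h ∈ monoSpan y q) :
    ∫ ω, D ω * h ω ∂μ = 0 := by
  induction hh using Submodule.span_induction with
  | mem h hmem =>
    obtain ⟨m, hm, g, rfl⟩ := hmem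
    exact hz m hm g
  | zero => simp
  | add h1 h2 hh1 hh2 ih1 ih2 =>
    have key : ∫ ω, D ω * (h1 + h2) ω ∂μ
        = (∫ ω, D ω * h1 ω ∂μ) + ∫ ω, D ω * h2 ω ∂μ := by
      rw [← integral_add (integrable_mul_monoSpan y hint hpq hD hh1)
        (integrable_mul_monoSpan y hint hpq hD hh2)]
      refine integral_congr_ae (Filter.Eventually.of_forall fun ω => ?_)
      simp [mul_add]
    rw [key, ih1, ih2, add_zero]
  | smul c h1 hh1 ih =>
    have key : ∫ ω, D ω * (c • h1) ω ∂μ = c * ∫ ω, D ω * h1 ω ∂μ := by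
      rw [← smul_eq_mul, ← integral_smul]
      refine integral_congr_ae (Filter.Eventually.of_forall fun ω => ?_)
      simp [Pi.smul_apply, smul_eq_mul]; ring
    rw [key, ih, mul_zero]

lemma conj_mem_monoSpan (y : J → Ω → ℂ)
    (hconj : ∀ j : J, ∃ j' : J, ∀ ω, y j' ω = starRingEnd ℂ (y j ω))
    {q : ℕ} {f : Ω → ℂ} (hf : f ∈ monoSpan y q) :
    (fun ω => starRingEnd ℂ (f ω)) ∈ monoSpan y q := by
  induction hf using Submodule.span_induction with
  | mem f hmem =>
    obtain ⟨m, hm, g, rfl⟩ := hmem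
    apply Submodule.subset_span
    refine ⟨m, hm, fun k => (hconj (g k)).choose, ?_⟩
    funext ω
    rw [map_prod]
    exact Finset.prod_congr rfl fun k _ => ((hconj (g k)).choose_spec ω).symm
  | zero =>
    have : (fun ω => starRingEnd ℂ ((0 : Ω → ℂ) ω)) = 0 := by funext ω; simp
    rw [this]; exact Submodule.zero_mem _
  | add f1 f2 h1 h2 ih1 ih2 =>
    have : (fun ω => starRingEnd ℂ ((f1 + f2) ω))
        = (fun ω => starRingEnd ℂ (f1 ω)) + fun ω => starRingEnd ℂ (f2 ω) := by
      funext ω; simp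
    rw [this]; exact Submodule.add_mem _ ih1 ih2
  | smul c f1 h1 ih =>
    have : (fun ω => starRingEnd ℂ ((c • f1) ω))
        = (starRingEnd ℂ c) • fun ω => starRingEnd ℂ (f1 ω) := by
      funext ω; simp [Pi.smul_apply, smul_eq_mul]
    rw [this]; exact Submodule.smul_mem _ _ ih


end MonoSpan

lemma sum_powerset_map {α β : Type*} [DecidableEq α] [DecidableEq β] {M : Type*}
    [AddCommMonoid M] (emb : α ↪ β) (A : Finset α) (F : Finset β → M) :
    ∑ E ∈ (A.map emb).powerset, F E = ∑ E ∈ A.powerset, F (E.map emb) := by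
  have hset : (A.map emb).powerset
      = A.powerset.map ⟨Finset.map emb, fun E F h => Finset.map_injective emb h⟩ := by
    ext E
    simp only [Finset.mem_powerset, Finset.mem_map, Function.Embedding.coeFn_mk]
    constructor
    · intro h
      obtain ⟨u, hu, rfl⟩ := Finset.subset_map_iff.1 h
      exact ⟨u, hu, rfl⟩
    · rintro ⟨u, hu, rfl⟩
      exact Finset.map_subset_map.2 hu
  rw [hset, Finset.sum_map]
  rfl

lemma integral_cmul {Ω : Type*} [MeasurableSpace Ω] (μ : MeasureTheory.Measure Ω)
    (c : ℂ) (f : Ω → ℂ) :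
    ∫ ω, c * f ω ∂μ = c * ∫ ω, f ω ∂μ := by
  simpa [smul_eq_mul] using MeasureTheory.integral_smul (μ := μ) c f

section WickCorr

variable {Ω : Type*} [MeasurableSpace Ω] {J : Type*}
  (μ : Measure Ω) [IsProbabilityMeasure μ] (y : J → Ω → ℂ)
  {N n m : ℕ} (I : Fin n → J) (g : Fin m → J)

/-- ground set `A ⊔ [m]` inside `Fin n ⊕ Fin m`. -/
noncomputable def sumGround (n m : ℕ) (A : Finset (Fin n)) : Finset (Fin n ⊕ Fin m) :=
  A.map ⟨Sum.inl, Sum.inl_injective⟩ ∪ Finset.univ.map ⟨Sum.inr, Sum.inr_injective⟩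

lemma momS_empty {L : Type*} (f : L → J) : momS μ y f (∅ : Finset L) = 1 := by
  unfold momS; simp

lemma cumS_eq_cumOf {L : Type*} (f : L → J) (A : Finset L) :
    cumS μ y f A = cumOf (momS μ y f) A := rfl

lemma sumGround_disj (n m : ℕ) (A : Finset (Fin n)) :
    Disjoint (A.map ⟨Sum.inl, Sum.inl_injective⟩)
      (Finset.univ.map (⟨Sum.inr, Sum.inr_injective⟩ : Fin m ↪ Fin n ⊕ Fin m)) := by
  rw [Finset.disjoint_left]
  rintro x hx hy
  obtain ⟨l, _, rfl⟩ := Finset.mem_map.1 hx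
  obtain ⟨k, _, hk⟩ := Finset.mem_map.1 hy
  simp at hk

lemma sumGround_prod (A : Finset (Fin n)) (ω : Ω) :
    ∏ x ∈ sumGround n m A, y (Sum.elim I g x) ω
      = (∏ l ∈ A, y (I l) ω) * ∏ k, y (g k) ω := by
  unfold sumGround
  rw [Finset.prod_union (sumGround_disj n m A), Finset.prod_map, Finset.prod_map]
  simp

lemma sumGround_card (A : Finset (Fin n)) : (sumGround n m A).card = A.card + m := by
  unfold sumGround
  rw [Finset.card_union_of_disjoint (sumGround_disj n m A), Finset.card_map,
    Finset.card_map, Finset.card_univ, Fintype.card_fin]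

lemma sumGround_inter (A : Finset (Fin n)) :
    sumGround n m A ∩ (Finset.univ.map (⟨Sum.inl, Sum.inl_injective⟩ : Fin n ↪ Fin n ⊕ Fin m))
      = A.map ⟨Sum.inl, Sum.inl_injective⟩ := by
  ext x
  cases x <;> simp [sumGround]

lemma sumGround_sdiff (A E : Finset (Fin n)) :
    sumGround n m A \ E.map ⟨Sum.inl, Sum.inl_injective⟩ = sumGround n m (A \ E) := by
  ext x
  cases x <;> simp [sumGround] <;> tauto

lemma cond_iff (E : Finset (Fin n ⊕ Fin m)) :
    (¬ E ⊆ Finset.univ.map (⟨Sum.inl, Sum.inl_injective⟩ : Fin n ↪ Fin n ⊕ Fin m))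
      ↔ ∃ k : Fin m, Sum.inr k ∈ E := by
  constructor
  · intro h
    obtain ⟨x, hxE, hxL⟩ := Finset.not_subset.1 h
    cases x with
    | inl l => exact absurd (Finset.mem_map.2 ⟨l, Finset.mem_univ l, rfl⟩) hxL
    | inr k => exact ⟨k, hxE⟩
  · rintro ⟨k, hk⟩ hsub
    have := hsub hk
    simp at this

lemma momS_map_inl (E : Finset (Fin n)) :
    momS μ y (Sum.elim I g) (E.map (⟨Sum.inl, Sum.inl_injective⟩ : Fin n ↪ Fin n ⊕ Fin m))
      = momS μ y I E := by
  unfold momS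
  congr 1
  funext ω
  rw [Finset.prod_map]
  rfl

/-- truncated cumulant sum -/
noncomputable def Tsum (I : Fin n → J) (g : Fin m → J) (A : Finset (Fin n)) : ℂ :=
  ∑ π ∈ partitionsOf (sumGround n m A),
    if ∀ B ∈ π, ∃ k : Fin m, Sum.inr k ∈ B then
      ∏ B ∈ π, cumS μ y (Sum.elim I g) B
    else 0

lemma moment_split (A : Finset (Fin n)) :
    momS μ y (Sum.elim I g) (sumGround n m A)
      = ∑ E ∈ A.powerset, momS μ y I E * Tsum μ y I g (A \ E) := by
  have hM : momS μ y (Sum.elim I g) (∅ : Finset (Fin n ⊕ Fin m)) = 1 := momS_empty μ y _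
  rw [← cum_inversion (momS μ y (Sum.elim I g)) hM (sumGround n m A),
    partitionsOf_split (sumGround n m A)
      (Finset.univ.map (⟨Sum.inl, Sum.inl_injective⟩ : Fin n ↪ Fin n ⊕ Fin m))
      (cumOf (momS μ y (Sum.elim I g))),
    sumGround_inter A, sum_powerset_map]
  refine Finset.sum_congr rfl fun E hE => ?_
  congr 1
  · rw [cum_inversion (momS μ y (Sum.elim I g)) hM, momS_map_inl]
  · rw [sumGround_sdiff A E]
    unfold Tsum
    rw [Finset.sum_filter]
    refine Finset.sum_congr rfl fun π hπ => ?_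
    congr 1
    · simp only [eq_iff_iff]
      constructor
      · intro h B hB; exact (cond_iff B).1 (h B hB)
      · intro h B hB; exact (cond_iff B).2 (h B hB)

lemma wick_corr
    (hint : ∀ p : ℕ, p ≤ N → ∀ h : Fin p → J, Integrable (fun ω => ∏ k, y (h k) ω) μ)
    (hnm : n + m ≤ N) (A : Finset (Fin n)) :
    Integrable (fun ω => wickS μ y I A ω * ∏ k, y (g k) ω) μ ∧
    ∫ ω, wickS μ y I A ω * ∏ k, y (g k) ω ∂μ = Tsum μ y I g A := by
  induction A using Finset.strongInduction with
  | _ A ih =>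
    have hAcard : A.card + m ≤ N := by
      have := Finset.card_le_univ A
      simp only [Finset.card_univ, Fintype.card_fin] at this
      omega
    have hfun : (fun ω => wickS μ y I A ω * ∏ k, y (g k) ω)
        = fun ω => (∏ x ∈ sumGround n m A, y (Sum.elim I g x) ω)
            - ∑ E ∈ (A.powerset.filter fun E => E ≠ ∅).attach,
                momS μ y I E.1 * (wickS μ y I (A \ E.1) ω * ∏ k, y (g k) ω) := by
      funext ω
      conv_lhs => rw [wickS]
      rw [sumGround_prod, sub_mul, Finset.sum_mul]
      congr 1
      exact Finset.sum_congr rfl fun E _ => mul_assoc _ _ _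
    have hssub : ∀ E : {x // x ∈ A.powerset.filter fun E => E ≠ ∅}, A \ E.1 ⊂ A := by
      rintro ⟨E, hE⟩
      simp only [Finset.mem_filter, Finset.mem_powerset] at hE
      exact Finset.sdiff_ssubset hE.1 (Finset.nonempty_iff_ne_empty.2 hE.2)
    have hint1 : Integrable (fun ω => ∏ x ∈ sumGround n m A, y (Sum.elim I g x) ω) μ := by
      apply integrable_finset_prod y hint
      rw [sumGround_card]
      exact hAcard
    have hintE : ∀ E ∈ (A.powerset.filter fun E => E ≠ ∅).attach,
        Integrable (fun ω => momS μ y I E.1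
          * (wickS μ y I (A \ E.1) ω * ∏ k, y (g k) ω)) μ :=
      fun E _ => ((ih _ (hssub E)).1).const_mul _
    have hintsum : Integrable (fun ω => ∑ E ∈ (A.powerset.filter fun E => E ≠ ∅).attach,
        momS μ y I E.1 * (wickS μ y I (A \ E.1) ω * ∏ k, y (g k) ω)) μ :=
      integrable_finset_sum _ hintE
    refine ⟨by rw [hfun]; exact hint1.sub hintsum, ?_⟩
    rw [hfun, integral_sub hint1 hintsum, integral_finset_sum _ hintE]
    have hterm : ∀ E ∈ (A.powerset.filter fun E => E ≠ ∅).attach,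
        ∫ ω, momS μ y I E.1 * (wickS μ y I (A \ E.1) ω * ∏ k, y (g k) ω) ∂μ
          = momS μ y I E.1 * Tsum μ y I g (A \ E.1) := by
      intro E hE
      rw [integral_cmul, (ih _ (hssub E)).2]
    rw [Finset.sum_congr rfl hterm]
    have hfirst : ∫ ω, ∏ x ∈ sumGround n m A, y (Sum.elim I g x) ω ∂μ
        = momS μ y (Sum.elim I g) (sumGround n m A) := rfl
    rw [hfirst, moment_split,
      Finset.sum_attach (A.powerset.filter fun E => E ≠ ∅)
        (fun E => momS μ y I E * Tsum μ y I g (A \ E)),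
      ← Finset.sum_filter_add_sum_filter_not A.powerset (fun E => E = ∅)
        (fun E => momS μ y I E * Tsum μ y I g (A \ E))]
    have h1 : A.powerset.filter (fun E => E = ∅) = {∅} := by
      ext E
      simp only [Finset.mem_filter, Finset.mem_powerset, Finset.mem_singleton,
        and_iff_right_iff_imp]
      rintro rfl; exact Finset.empty_subset A
    have h2 : A.powerset.filter (fun E => ¬ E = ∅) = A.powerset.filter (fun E => E ≠ ∅) := rfl
    rw [h1, h2, Finset.sum_singleton, Finset.sdiff_empty, momS_empty, one_mul]
    exact add_sub_cancel_right _ _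

end WickCorr

open scoped Classical in
/-- uniqueness of Wick polynomials. Any polynomial `W'` of total degree
at most `|I|` whose correlations with all monomials `y^{I'}`, `|I'| ≤ N − |I|`,
are given by the truncated moments-to-cumulants formula coincides `μ`-a.s.
with the Wick polynomial `:y^I:`. -/
theorem wick_uniqueness {Ω : Type*} [MeasurableSpace Ω] {J : Type*}
    (μ : Measure Ω) [IsProbabilityMeasure μ] (y : J → Ω → ℂ)
    (N n : ℕ) (I : Fin n → J) (h2n : 2 * n ≤ N)
    (hmeas : ∀ j, AEMeasurable (y j) μ)
    (hconj : ∀ j : J, ∃ j' : J, ∀ ω, y j' ω = starRingEnd ℂ (y j ω))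
    (hint : ∀ m : ℕ, m ≤ N → ∀ g : Fin m → J,
      Integrable (fun ω => ∏ k, y (g k) ω) μ)
    (W' : MvPolynomial J ℂ) (hdeg : W'.totalDegree ≤ n)
    (hW : ∀ m : ℕ, m ≤ N - n → ∀ g : Fin m → J,
      (∫ ω, MvPolynomial.eval (fun j => y j ω) W' * ∏ k, y (g k) ω ∂μ)
        = ∑ π ∈ partitionsOf (Finset.univ : Finset (Fin n ⊕ Fin m)),
            if ∀ A ∈ π, ∃ k : Fin m, Sum.inr k ∈ A then
              ∏ A ∈ π, cumS μ y (Sum.elim I g) A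
            else 0) :
    ∀ᵐ ω ∂μ, MvPolynomial.eval (fun j => y j ω) W'
      = wickS μ y I (Finset.univ : Finset (Fin n)) ω := by
  have hnn : n ≤ N := by omega
  have hnN : n ≤ N - n := by omega
  have hnnN : n + (N - n) ≤ N := by omega
  -- the polynomial as an element of the monomial span
  have hWmem : (fun ω => MvPolynomial.eval (fun j => y j ω) W') ∈ monoSpan y n := by
    have hrep : (fun ω => MvPolynomial.eval (fun j => y j ω) W')
        = ∑ d ∈ W'.support, (MvPolynomial.coeff d W')
            • (fun ω => ∏ j ∈ d.support, (y j ω) ^ d j) := by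
      funext ω
      rw [MvPolynomial.eval_eq, Finset.sum_apply]
      exact Finset.sum_congr rfl fun d _ => by simp [Pi.smul_apply, smul_eq_mul]
    rw [hrep]
    refine Submodule.sum_mem _ fun d hd => Submodule.smul_mem _ _ ?_
    have hdeg' : ∑ j ∈ d.support, d j ≤ n := by
      have h1 := MvPolynomial.le_totalDegree hd
      have h2 : (d.sum fun _ e => e) = ∑ j ∈ d.support, d j := rfl
      rw [h2] at h1
      exact h1.trans hdeg
    have key : (fun ω => ∏ j ∈ d.support, (y j ω) ^ d j)
        = fun ω => ∏ p ∈ d.support.sigma (fun j => Finset.range (d j)), y p.1 ω := by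
      funext ω
      rw [Finset.prod_sigma]
      exact Finset.prod_congr rfl fun j _ => by simp
    rw [key]
    exact finset_prod_mem_monoSpan y (d.support.sigma fun j => Finset.range (d j))
      (fun p => p.1) (by rw [Finset.card_sigma]; simpa using hdeg')
  -- the Wick polynomial as an element of the monomial span
  have hwickmem : ∀ A : Finset (Fin n), wickS μ y I A ∈ monoSpan y n := by
    intro A
    induction A using Finset.strongInduction with
    | _ A ih =>
      have hA : wickS μ y I A = (fun ω => ∏ l ∈ A, y (I l) ω)
          - ∑ E ∈ (A.powerset.filter fun E => E ≠ ∅).attach,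
              momS μ y I E.1 • wickS μ y I (A \ E.1) := by
        funext ω
        conv_lhs => rw [wickS]
        simp only [Pi.sub_apply, Finset.sum_apply, Pi.smul_apply, smul_eq_mul]
      rw [hA]
      refine Submodule.sub_mem _ ?_ (Submodule.sum_mem _ fun E hE =>
        Submodule.smul_mem _ _ (ih _ ?_))
      · apply finset_prod_mem_monoSpan
        have := A.card_le_univ
        simpa using this
      · have hE2 := E.2
        simp only [Finset.mem_filter, Finset.mem_powerset] at hE2
        exact Finset.sdiff_ssubset hE2.1 (Finset.nonempty_iff_ne_empty.2 hE2.2)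
  set D : Ω → ℂ := fun ω => MvPolynomial.eval (fun j => y j ω) W'
      - wickS μ y I (Finset.univ : Finset (Fin n)) ω with hDdef
  have hDmem : D ∈ monoSpan y n := by
    have : D = (fun ω => MvPolynomial.eval (fun j => y j ω) W')
        - wickS μ y I (Finset.univ : Finset (Fin n)) := rfl
    rw [this]
    exact Submodule.sub_mem _ hWmem (hwickmem _)
  -- vanishing of correlations of D against monomials
  have hz : ∀ m : ℕ, m ≤ N - n → ∀ g : Fin m → J,
      ∫ ω, D ω * ∏ k, y (g k) ω ∂μ = 0 := by
    intro m hm g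
    have hmono : (fun ω => ∏ k, y (g k) ω) ∈ monoSpan y (N - n) :=
      Submodule.subset_span ⟨m, hm, g, rfl⟩
    have hint1 : Integrable (fun ω => MvPolynomial.eval (fun j => y j ω) W'
        * ∏ k, y (g k) ω) μ :=
      integrable_mul_monoSpan y hint hnnN hWmem hmono
    have hw := wick_corr μ y I g hint (show n + m ≤ N by omega) Finset.univ
    have hsplit : ∫ ω, D ω * ∏ k, y (g k) ω ∂μ
        = (∫ ω, MvPolynomial.eval (fun j => y j ω) W' * ∏ k, y (g k) ω ∂μ)
          - ∫ ω, wickS μ y I Finset.univ ω * ∏ k, y (g k) ω ∂μ := by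
      rw [← integral_sub hint1 hw.1]
      refine integral_congr_ae (Filter.Eventually.of_forall fun ω => ?_)
      simp only [hDdef, sub_mul]
    have hTrw : Tsum μ y I g (Finset.univ : Finset (Fin n))
        = ∑ π ∈ partitionsOf (Finset.univ : Finset (Fin n ⊕ Fin m)),
            if ∀ A ∈ π, ∃ k : Fin m, Sum.inr k ∈ A then
              ∏ A ∈ π, cumS μ y (Sum.elim I g) A
            else 0 := by
      unfold Tsum
      rw [show sumGround n m (Finset.univ : Finset (Fin n))
        = (Finset.univ : Finset (Fin n ⊕ Fin m)) from by
          ext x; cases x <;> simp [sumGround]]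
    rw [hsplit, hW m hm g, hw.2, hTrw, sub_self]
  -- conjugate of D
  have hconjDmem : (fun ω => starRingEnd ℂ (D ω)) ∈ monoSpan y (N - n) :=
    monoSpan_mono y hnN (conj_mem_monoSpan y hconj hDmem)
  have hzero : ∫ ω, D ω * starRingEnd ℂ (D ω) ∂μ = 0 :=
    integral_mul_monoSpan_zero y hint hnnN hDmem hz hconjDmem
  have hintDD : Integrable (fun ω => D ω * starRingEnd ℂ (D ω)) μ :=
    integrable_mul_monoSpan y hint hnnN hDmem hconjDmem
  have hre : ∀ ω, D ω * starRingEnd ℂ (D ω) = ((Complex.normSq (D ω) : ℝ) : ℂ) :=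
    fun ω => Complex.mul_conj _
  have hnsint : Integrable (fun ω => Complex.normSq (D ω)) μ := by
    have := hintDD.re
    refine this.congr (Filter.Eventually.of_forall fun ω => ?_)
    simp only [RCLike.re_to_complex]
    rw [hre ω, Complex.ofReal_re]
  have hnszero : ∫ ω, Complex.normSq (D ω) ∂μ = 0 := by
    calc ∫ ω, Complex.normSq (D ω) ∂μ
        = ∫ ω, RCLike.re (D ω * starRingEnd ℂ (D ω)) ∂μ :=
          integral_congr_ae (Filter.Eventually.of_forall fun ω => by
            simp only [RCLike.re_to_complex]
            rw [hre ω, Complex.ofReal_re])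
      _ = RCLike.re (∫ ω, D ω * starRingEnd ℂ (D ω) ∂μ) := integral_re hintDD
      _ = 0 := by rw [hzero]; simp
  have hae : (fun ω => Complex.normSq (D ω)) =ᵐ[μ] 0 := by
    rw [← integral_eq_zero_iff_of_nonneg (fun ω => Complex.normSq_nonneg _) hnsint]
    exact hnszero
  filter_upwards [hae] with ω hω
  have : Complex.normSq (D ω) = 0 := hω
  have hD0 : D ω = 0 := Complex.normSq_eq_zero.1 this
  have h2 : MvPolynomial.eval (fun j => y j ω) W'
      - wickS μ y I (Finset.univ : Finset (Fin n)) ω = 0 := hD0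
  exact sub_eq_zero.1 h2
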